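/- Let R be a finitely generated commutative ring and a ∈ R an element such that for every m ≥ 1 there exists b ∈ R with a = m·b (a is additively divisible). Then a = 0. -/

import Mathlib

lemma int_isJacobsonRing : IsJacobsonRing ℤ := by
  rw [isJacobsonRing_iff_prime_eq]
  intro P hP
  by_cases hb : P = ⊥
  · subst hb
    refine le_antisymm ?_ Ideal.le_jacobson
    intro x hx
    rw [Ideal.mem_jacobson_bot] at hx
    have h1 := hx 1
    have h2 := hx (-1)
    rw [Int.isUnit_iff] at h1 h2
    rw [Ideal.mem_bot]
    omega
  · haveI := @IsPrime.to_maximal_ideal ℤ _ _ _ P hP hb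
    exact Ideal.jacobson_eq_self_of_isMaximal

/-- In a finitely generated commutative ring, every additively divisible element is zero. -/
theorem additively_divisible_eq_zero {R : Type*} [CommRing R]
    (hfg : ∃ s : Finset R, Algebra.adjoin ℤ (s : Set R) = ⊤)
    (a : R) (hdiv : ∀ m : ℕ, 1 ≤ m → ∃ b : R, a = m • b) : a = 0 := by
  haveI : IsJacobsonRing ℤ := int_isJacobsonRing
  haveI : Algebra.FiniteType ℤ R := ⟨hfg⟩
  haveI : IsNoetherianRing R := Algebra.FiniteType.isNoetherianRing ℤ R
  -- the annihilator of a
  set T : Ideal R := (Submodule.span R {a}).annihilator with hT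
  -- it suffices to show T = ⊤
  suffices hTtop : T = ⊤ by
    have h1 : (1 : R) ∈ T := hTtop ▸ Submodule.mem_top
    rw [hT, Submodule.mem_annihilator_span_singleton, one_smul] at h1
    exact h1
  by_contra hne
  obtain ⟨m, hm, hTm⟩ := Ideal.exists_le_maximal T hne
  haveI := hm
  letI : Field (R ⧸ m) := Ideal.Quotient.field m
  -- the residue field
  let K := R ⧸ m
  haveI : Algebra.FiniteType ℤ K :=
    Algebra.FiniteType.of_surjective
      (Ideal.Quotient.mk m).toIntAlgHom Ideal.Quotient.mk_surjective
  haveI : Module.Finite ℤ K := finite_of_finite_type_of_isJacobsonRing ℤ K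
  haveI : Algebra.IsIntegral ℤ K := Algebra.IsIntegral.of_finite ℤ K
  -- K has positive characteristic: find n ≥ 1 with (n : K) = 0
  obtain ⟨n, hn1, hnK⟩ : ∃ n : ℕ, 1 ≤ n ∧ (n : K) = 0 := by
    by_cases hinj : Function.Injective (algebraMap ℤ K)
    · exact absurd ((Algebra.IsIntegral.isField_iff_isField hinj).mpr
        (Field.toIsField K)) Int.not_isField
    · rw [Function.not_injective_iff] at hinj
      obtain ⟨x, y, hxy, hne'⟩ := hinj
      refine ⟨(x - y).natAbs, by omega, ?_⟩
      rw [eq_intCast, eq_intCast] at hxy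
      have hc : ((x - y : ℤ) : K) = 0 := by push_cast; rw [hxy]; ring
      have h3 : (((x - y).natAbs : ℤ) : K) = 0 := by
        rcases Int.natAbs_eq (x - y) with h | h
        · rw [← h]; exact hc
        · have h' : ((x - y).natAbs : ℤ) = -(x - y) := by omega
          rw [h', Int.cast_neg, hc, neg_zero]
      rw [← Int.cast_natCast (R := K)]
      exact h3
  -- (n : R) ∈ m
  have hnm : ((n : ℕ) : R) ∈ m := by
    rw [← Ideal.Quotient.eq_zero_iff_mem]
    rw [map_natCast (Ideal.Quotient.mk m) n]
    exact hnK
  -- Krull intersection with I = span {(n : R)}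
  set I : Ideal R := Ideal.span {((n : ℕ) : R)} with hI
  have hmem : a ∈ (⨅ i : ℕ, I ^ i • ⊤ : Submodule R R) := by
    rw [Submodule.mem_iInf]
    intro i
    obtain ⟨b, hb⟩ := hdiv (n ^ i) (Nat.one_le_pow _ _ (by omega))
    have : a ∈ I ^ i := by
      rw [hI, Ideal.span_singleton_pow, Ideal.mem_span_singleton]
      exact ⟨b, by rw [hb, nsmul_eq_mul]; push_cast; ring⟩
    rw [smul_eq_mul, ← Ideal.one_eq_top, mul_one]
    exact this
  obtain ⟨r, hr⟩ := (Ideal.mem_iInf_smul_pow_eq_bot_iff I a).mp hmem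
  -- 1 - r annihilates a, hence lies in m; but r ∈ I ⊆ m, contradiction
  have h1r : (1 : R) - (r : R) ∈ T := by
    rw [hT, Submodule.mem_annihilator_span_singleton, sub_smul, one_smul, hr, sub_self]
  have hrm : (r : R) ∈ m := (Ideal.span_singleton_le_iff_mem m).mpr hnm r.2
  have : (1 : R) ∈ m := by
    have := m.add_mem (hTm h1r) hrm
    simpa using this
  exact hm.ne_top (Ideal.eq_top_of_isUnit_mem m this isUnit_one)
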